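/- Let Ω be a finite set, C a set of subsets of Ω, and C⁺ the set consisting of all nonempty members of C together with all singletons {a} for a ∈ Ω. Then the following are equivalent: (i) there exists a linear order on Ω under which every member of C is convex; (ii) the intersection graph of C⁺ is isomorphic (as a simple graph) to the intersection graph of some finite set of closed intervals [s, t] = {x ∈ ℝ : s ≤ x ≤ t} with s < t of the real line. -/

import Mathlib

/-- A subset `A` is convex with respect to an order relation `le` if whenever
`p ≤ q ≤ r` with `p ∈ A` and `r ∈ A`, also `q ∈ A`. -/
def IsConvex {Ω : Type*} (le : Ω → Ω → Prop) (A : Set Ω) : Prop :=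
  ∀ p q r : Ω, le p q → le q r → p ∈ A → r ∈ A → q ∈ A

/-- Two subsets overlap if they have nonempty intersection and neither contains the other. -/
def Overlap {Ω : Type*} (A B : Set Ω) : Prop :=
  (A ∩ B).Nonempty ∧ ¬ A ⊆ B ∧ ¬ B ⊆ A

/-- A patchwork on `Ω` is a set of subsets of `Ω` containing `∅` and `Ω` and closed under
intersection, union and difference of overlapping pairs. -/
def IsPatchwork {Ω : Type*} (P : Set (Set Ω)) : Prop :=
  ∅ ∈ P ∧ Set.univ ∈ P ∧
    ∀ A ∈ P, ∀ B ∈ P, Overlap A B → A ∩ B ∈ P ∧ A ∪ B ∈ P ∧ A \ B ∈ P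

/-- A member of a patchwork is autonomous if it is nonempty and overlaps no member. -/
def Autonomous {Ω : Type*} (P : Set (Set Ω)) (A : Set Ω) : Prop :=
  A ∈ P ∧ A.Nonempty ∧ ∀ B ∈ P, ¬ Overlap A B

/-- The cohort under `B`: the maximal autonomous proper subsets of `B`. -/
def Cohort {Ω : Type*} (P : Set (Set Ω)) (B : Set Ω) : Set (Set Ω) :=
  {A | Autonomous P A ∧ A ⊂ B ∧ ∀ C, Autonomous P C → C ⊂ B → A ⊆ C → A = C}

/-- Two members of a patchwork are adjacent if they are disjoint and their union is a member. -/
def Adjacent {Ω : Type*} (P : Set (Set Ω)) (A B : Set Ω) : Prop :=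
  Disjoint A B ∧ A ∪ B ∈ P

/-- The smallest patchwork on `Ω` containing `C`. -/
def patchworkClosure {Ω : Type*} (C : Set (Set Ω)) : Set (Set Ω) :=
  ⋂₀ {P | IsPatchwork P ∧ C ⊆ P}

/-- The intersection graph of a family `F` of sets: vertices are the members of `F`, with an
edge between two distinct members exactly when they have nonempty intersection. -/
def interGraph {α : Type*} (F : Set (Set α)) : SimpleGraph F where
  Adj A B := A ≠ B ∧ ((A : Set α) ∩ (B : Set α)).Nonempty
  symm := ⟨by
    rintro A B ⟨hne, h⟩
    exact ⟨hne.symm, by rwa [Set.inter_comm]⟩⟩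
  loopless := ⟨fun A h => h.1 rfl⟩

/-- `C⁺`: the nonempty members of `C` together with all singletons of points of `Ω`. -/
def CPlus {Ω : Type*} (C : Set (Set Ω)) : Set (Set Ω) :=
  {A ∈ C | A.Nonempty} ∪ Set.range (fun a : Ω => ({a} : Set Ω))

open Set in
/-- Endpoints of equal nonempty real closed intervals agree. -/
lemma icc_eq_icc_endpoints {s t s' t' : ℝ} (h1 : s ≤ t) (h2 : s' ≤ t')
    (h : Set.Icc s t = Set.Icc s' t') : s = s' ∧ t = t' := by
  have hs : s ∈ Set.Icc s' t' := h ▸ Set.left_mem_Icc.mpr h1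
  have hs' : s' ∈ Set.Icc s t := h.symm ▸ Set.left_mem_Icc.mpr h2
  have ht : t ∈ Set.Icc s' t' := h ▸ Set.right_mem_Icc.mpr h1
  have ht' : t' ∈ Set.Icc s t := h.symm ▸ Set.right_mem_Icc.mpr h2
  exact ⟨le_antisymm hs'.1 hs.1, le_antisymm ht.2 ht'.2⟩

/-- Two disjoint nonempty closed real intervals are separated. -/
lemma icc_disjoint_sep {s t s' t' : ℝ} (h1 : s ≤ t) (h2 : s' ≤ t')
    (h : Set.Icc s t ∩ Set.Icc s' t' = ∅) : t < s' ∨ t' < s := by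
  by_contra hc
  push_neg at hc
  have : max s s' ∈ Set.Icc s t ∩ Set.Icc s' t' := by
    constructor
    · exact ⟨le_max_left _ _, max_le h1 hc.1⟩
    · exact ⟨le_max_right _ _, max_le hc.2 h2⟩
  rw [h] at this
  exact this

theorem statement19' {Ω : Type*} [Finite Ω] (C : Set (Set Ω)) :
      (∃ I : Set (Set ℝ), I.Finite ∧
        (∀ J ∈ I, ∃ s t : ℝ, s < t ∧ J = Set.Icc s t) ∧
        Nonempty (interGraph (CPlus C) ≃g interGraph I)) →
    (∃ L : LinearOrder Ω, ∀ A ∈ C, IsConvex L.le A) := by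
  classical
  rintro ⟨I, hIfin, hIint, ⟨G⟩⟩
  choose! s t hst hJ using hIint
  -- vertex of CPlus C for each point
  let vm : Ω → (CPlus C) := fun a => ⟨{a}, Or.inr ⟨a, rfl⟩⟩
  have vmInj : Function.Injective vm := by
    intro a b h
    have : ({a} : Set Ω) = {b} := congrArg Subtype.val h
    simpa [Set.singleton_eq_singleton_iff] using this
  let Jm : Ω → I := fun a => G (vm a)
  let lo : Ω → ℝ := fun a => s (Jm a)
  let hi : Ω → ℝ := fun a => t (Jm a)
  have hmem : ∀ a, ((Jm a : Set ℝ)) = Set.Icc (lo a) (hi a) := fun a => hJ _ (Jm a).2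
  have hlt : ∀ a, lo a < hi a := fun a => hst _ (Jm a).2
  have JmInj : Function.Injective Jm := fun a b h => vmInj (G.toEquiv.injective h)
  have disj : ∀ a b : Ω, a ≠ b → ((Jm a : Set ℝ) ∩ (Jm b : Set ℝ)) = ∅ := by
    intro a b hab
    have hnadj : ¬ (interGraph (CPlus C)).Adj (vm a) (vm b) := by
      rintro ⟨-, x, hx1, hx2⟩
      have : x = a := hx1
      have : x = b := hx2
      exact hab (hx1.symm.trans hx2)
    have hnadj' : ¬ (interGraph I).Adj (Jm a) (Jm b) := by
      rw [G.map_adj_iff]; exact hnadj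
    rw [Set.not_nonempty_iff_eq_empty.symm]
    intro hne
    exact hnadj' ⟨fun h => hab (JmInj h), hne⟩
  have loInj : Function.Injective lo := by
    intro a b h
    by_contra hab
    have h1 : lo a ∈ (Jm a : Set ℝ) := by rw [hmem]; exact Set.left_mem_Icc.mpr (hlt a).le
    have h2 : lo a ∈ (Jm b : Set ℝ) := by rw [hmem, h]; exact Set.left_mem_Icc.mpr (hlt b).le
    have := disj a b hab
    exact absurd (Set.mem_inter h1 h2) (by rw [this]; exact id)
  have sep : ∀ a b : Ω, lo a < lo b → hi a < lo b := by
    intro a b h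
    have hab : a ≠ b := fun hh => absurd (congrArg lo hh) h.ne
    by_contra hc
    push_neg at hc
    have h1 : lo b ∈ (Jm a : Set ℝ) := by rw [hmem]; exact ⟨h.le, hc⟩
    have h2 : lo b ∈ (Jm b : Set ℝ) := by rw [hmem]; exact Set.left_mem_Icc.mpr (hlt b).le
    have := disj a b hab
    exact absurd (Set.mem_inter h1 h2) (by rw [this]; exact id)
  refine ⟨LinearOrder.lift' lo loInj, ?_⟩
  intro A hA p q r hpq hqr hp hr
  have hpq' : lo p ≤ lo q := hpq
  have hqr' : lo q ≤ lo r := hqr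
  by_contra hq
  have hpq2 : lo p < lo q := lt_of_le_of_ne hpq' (fun h => hq (loInj h ▸ hp))
  have hqr2 : lo q < lo r := lt_of_le_of_ne hqr' (fun h => hq (loInj h.symm ▸ hr))
  -- A as a vertex
  let vA : (CPlus C) := ⟨A, Or.inl ⟨hA, ⟨p, hp⟩⟩⟩
  have hpa : vm p ≠ vA := by
    intro h
    have hA' : ({p} : Set Ω) = A := congrArg Subtype.val h
    have : r = p := by rw [← hA'] at hr; exact hr
    rw [this] at hqr2
    exact absurd (hpq2.trans hqr2) (lt_irrefl _)
  have hra : vm r ≠ vA := by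
    intro h
    have hA' : ({r} : Set Ω) = A := congrArg Subtype.val h
    have : p = r := by rw [← hA'] at hp; exact hp
    rw [this] at hpq2
    exact absurd (hpq2.trans hqr2) (lt_irrefl _)
  have hqa : vm q ≠ vA := by
    intro h
    have hA' : ({q} : Set Ω) = A := congrArg Subtype.val h
    have : p = q := by rw [← hA'] at hp; exact hp
    exact hpq2.ne (congrArg lo this)
  -- adjacency facts
  have hadjp : (interGraph (CPlus C)).Adj (vm p) vA := ⟨hpa, ⟨p, rfl, hp⟩⟩
  have hadjr : (interGraph (CPlus C)).Adj (vm r) vA := ⟨hra, ⟨r, rfl, hr⟩⟩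
  have hnadjq : ¬ (interGraph (CPlus C)).Adj (vm q) vA := by
    rintro ⟨-, x, hx1, hx2⟩
    have : x = q := hx1
    exact hq (this ▸ hx2)
  obtain ⟨-, x, hxp, hxA⟩ : (interGraph I).Adj (Jm p) (G vA) := G.map_adj_iff.mpr hadjp
  obtain ⟨-, y, hyr, hyA⟩ : (interGraph I).Adj (Jm r) (G vA) := G.map_adj_iff.mpr hadjr
  have hqdisj : ((Jm q : Set ℝ) ∩ ((G vA : I) : Set ℝ)) = ∅ := by
    rw [← Set.not_nonempty_iff_eq_empty]
    intro hne
    exact hnadjq (G.map_adj_iff.mp ⟨fun h => hqa (G.toEquiv.injective h), hne⟩)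
  -- interval endpoints of A
  have hAset : ((G vA : I) : Set ℝ) = Set.Icc (s (G vA)) (t (G vA)) := hJ _ (G vA).2
  have hAlt : s (G vA) < t (G vA) := hst _ (G vA).2
  rw [hmem] at hqdisj hxp hyr
  rw [hAset] at hqdisj hxA hyA
  rcases icc_disjoint_sep (hlt q).le hAlt.le hqdisj with h | h
  · -- hi q < s A ; x ∈ [lo p, hi p] ∩ [sA, tA]
    have h1 : hi p < lo q := sep p q hpq2
    have := hxp.2  -- x ≤ hi p
    have := hxA.1  -- s (G vA) ≤ x
    have := (hlt q)
    linarith [hxp.2, hxA.1, hlt q]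
  · -- t A < lo q
    have h2 : hi q < lo r := sep q r hqr2
    linarith [hyr.1, hyA.2, hlt q]

theorem statement19'' {Ω : Type*} [Finite Ω] (C : Set (Set Ω)) :
    (∃ L : LinearOrder Ω, ∀ A ∈ C, IsConvex L.le A) →
      ∃ I : Set (Set ℝ), I.Finite ∧
        (∀ J ∈ I, ∃ s t : ℝ, s < t ∧ J = Set.Icc s t) ∧
        Nonempty (interGraph (CPlus C) ≃g interGraph I) := by
  classical
  rintro ⟨L, hC⟩
  letI := L
  letI : Fintype Ω := Fintype.ofFinite Ω
  let e : Fin (Fintype.card Ω) ≃o Ω := monoEquivOfFin Ω rfl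
  let f : Ω → ℝ := fun a => ((e.symm a : ℕ) : ℝ)
  have hf : StrictMono f := by
    intro a b hab
    have h1 : e.symm a < e.symm b := e.symm.strictMono hab
    have h2 : ((e.symm a : Fin _) : ℕ) < ((e.symm b : Fin _) : ℕ) := h1
    show (((e.symm a : Fin _) : ℕ) : ℝ) < (((e.symm b : Fin _) : ℕ) : ℝ)
    exact_mod_cast h2
  have hint : ∀ a b : Ω, f a ≤ f b + 2⁻¹ → f a ≤ f b := by
    intro a b h
    by_contra h'
    push_neg at h'
    have h2 : ((e.symm b : ℕ) : ℝ) < ((e.symm a : ℕ) : ℝ) := h'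
    have h3 : (e.symm b : ℕ) < (e.symm a : ℕ) := by exact_mod_cast h2
    have h4 : ((e.symm b : ℕ) : ℝ) + 1 ≤ ((e.symm a : ℕ) : ℝ) := by exact_mod_cast h3
    have : f a ≤ f b + 2⁻¹ := h
    simp only [f] at this h4
    linarith
  -- endpoints
  let lo : Set Ω → ℝ := fun A => sInf (f '' A)
  let hi : Set Ω → ℝ := fun A => sSup (f '' A)
  have hlomem : ∀ A : Set Ω, A.Nonempty → lo A ∈ f '' A := fun A hA =>
    Set.Nonempty.csInf_mem (hA.image f) (A.toFinite.image f)
  have hhimem : ∀ A : Set Ω, A.Nonempty → hi A ∈ f '' A := fun A hA =>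
    Set.Nonempty.csSup_mem (hA.image f) (A.toFinite.image f)
  have hbounds : ∀ (A : Set Ω) (x : Ω), x ∈ A → lo A ≤ f x ∧ f x ≤ hi A := by
    intro A x hx
    constructor
    · exact csInf_le (A.toFinite.image f).bddBelow ⟨x, hx, rfl⟩
    · exact le_csSup (A.toFinite.image f).bddAbove ⟨x, hx, rfl⟩
  have hlohi : ∀ A : Set Ω, A.Nonempty → lo A ≤ hi A := by
    intro A hA
    obtain ⟨x, hx, hfx⟩ := hlomem A hA
    rw [← hfx]
    exact (hbounds A x hx).2
  have hne : ∀ A ∈ CPlus C, A.Nonempty := by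
    rintro A (⟨-, h⟩ | ⟨a, rfl⟩)
    · exact h
    · exact ⟨a, rfl⟩
  have hconv : ∀ A ∈ CPlus C, IsConvex L.le A := by
    rintro A (⟨hA, -⟩ | ⟨a, rfl⟩)
    · exact hC A hA
    · intro p q r hpq hqr hp hr
      have hp' : p = a := hp
      have hr' : r = a := hr
      have : p = r := hp'.trans hr'.symm
      have hqa : q = p := le_antisymm (this ▸ hqr) hpq
      rw [hqa]; exact hp
  have hmemiff : ∀ A ∈ CPlus C, ∀ x : Ω, x ∈ A ↔ lo A ≤ f x ∧ f x ≤ hi A := by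
    intro A hA x
    constructor
    · exact hbounds A x
    · rintro ⟨h1, h2⟩
      obtain ⟨a1, ha1, hfa1⟩ := hlomem A (hne A hA)
      obtain ⟨a2, ha2, hfa2⟩ := hhimem A (hne A hA)
      have hl : a1 ≤ x := hf.le_iff_le.mp (hfa1.symm ▸ h1)
      have hr : x ≤ a2 := hf.le_iff_le.mp (hfa2.symm ▸ h2)
      exact hconv A hA a1 x a2 hl hr ha1 ha2
  have hinter : ∀ A ∈ CPlus C, ∀ B ∈ CPlus C,
      ((A ∩ B).Nonempty ↔ lo A ≤ hi B ∧ lo B ≤ hi A) := by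
    intro A hA B hB
    constructor
    · rintro ⟨x, hxA, hxB⟩
      obtain ⟨h1, h2⟩ := hbounds A x hxA
      obtain ⟨h3, h4⟩ := hbounds B x hxB
      exact ⟨h1.trans h4, h3.trans h2⟩
    · rintro ⟨h1, h2⟩
      rcases le_total (lo A) (lo B) with h | h
      · obtain ⟨b, hb, hfb⟩ := hlomem B (hne B hB)
        have : b ∈ A := (hmemiff A hA b).mpr ⟨hfb.symm ▸ h, hfb.symm ▸ h2⟩
        exact ⟨b, this, hb⟩
      · obtain ⟨a, ha, hfa⟩ := hlomem A (hne A hA)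
        have : a ∈ B := (hmemiff B hB a).mpr ⟨hfa.symm ▸ h, hfa.symm ▸ h1⟩
        exact ⟨a, (hmemiff A hA a).mpr ⟨hfa.ge, hfa.symm ▸ hlohi A (hne A hA)⟩, this⟩
  -- integrality : lo/hi are nat casts
  have hcast : ∀ (x y : Ω), f x - 4⁻¹ ≤ f y + 4⁻¹ → f x ≤ f y := by
    intro x y h
    exact hint x y (by linarith)
  let g : Set Ω → Set ℝ := fun A => Set.Icc (lo A - 4⁻¹) (hi A + 4⁻¹)
  have hglt : ∀ A ∈ CPlus C, lo A - 4⁻¹ < hi A + 4⁻¹ := by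
    intro A hA
    have := hlohi A (hne A hA)
    linarith
  have hgInter : ∀ A ∈ CPlus C, ∀ B ∈ CPlus C,
      ((g A ∩ g B).Nonempty ↔ (A ∩ B).Nonempty) := by
    intro A hA B hB
    simp only [g, Set.Icc_inter_Icc, Set.nonempty_Icc, sup_le_iff, le_inf_iff]
    rw [hinter A hA B hB]
    obtain ⟨a1, -, hfa1⟩ := hlomem A (hne A hA)
    obtain ⟨a2, -, hfa2⟩ := hhimem A (hne A hA)
    obtain ⟨b1, -, hfb1⟩ := hlomem B (hne B hB)
    obtain ⟨b2, -, hfb2⟩ := hhimem B (hne B hB)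
    have hAA := hlohi A (hne A hA)
    have hBB := hlohi B (hne B hB)
    constructor
    · rintro ⟨⟨-, h1⟩, h2, -⟩
      constructor
      · have := hcast a1 b2 (by rw [hfa1, hfb2]; exact h2)
        rw [hfa1, hfb2] at this; exact this
      · have := hcast b1 a2 (by rw [hfb1, hfa2]; exact h1)
        rw [hfb1, hfa2] at this; exact this
    · rintro ⟨h1, h2⟩
      refine ⟨⟨by linarith, by linarith⟩, by linarith, by linarith⟩
  have hgInj : Set.InjOn g (CPlus C) := by
    intro A hA B hB h
    obtain ⟨h1, h2⟩ := icc_eq_icc_endpoints (hglt A hA).le (hglt B hB).le h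
    have hlo : lo A = lo B := by linarith
    have hhi : hi A = hi B := by linarith
    ext x
    rw [hmemiff A hA x, hmemiff B hB x, hlo, hhi]
  refine ⟨g '' (CPlus C), (Set.toFinite (CPlus C)).image g, ?_, ?_⟩
  · rintro J ⟨A, hA, rfl⟩
    exact ⟨lo A - 4⁻¹, hi A + 4⁻¹, hglt A hA, rfl⟩
  · refine ⟨⟨Equiv.Set.imageOfInjOn g (CPlus C) hgInj, ?_⟩⟩
    rintro ⟨A, hA⟩ ⟨B, hB⟩
    show (_ ≠ _ ∧ (g A ∩ g B).Nonempty) ↔ (_ ≠ _ ∧ (A ∩ B).Nonempty)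
    rw [hgInter A hA B hB]
    constructor
    · rintro ⟨h1, h2⟩
      refine ⟨?_, h2⟩
      intro hh
      exact h1 (congrArg (Equiv.Set.imageOfInjOn g (CPlus C) hgInj) hh)
    · rintro ⟨h1, h2⟩
      refine ⟨?_, h2⟩
      intro hh
      have : g A = g B := congrArg Subtype.val hh
      exact h1 (Subtype.ext (hgInj hA hB this))

theorem statement19 {Ω : Type*} [Finite Ω] (C : Set (Set Ω)) :
    (∃ L : LinearOrder Ω, ∀ A ∈ C, IsConvex L.le A) ↔
      ∃ I : Set (Set ℝ), I.Finite ∧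
        (∀ J ∈ I, ∃ s t : ℝ, s < t ∧ J = Set.Icc s t) ∧
        Nonempty (interGraph (CPlus C) ≃g interGraph I) :=
  ⟨statement19'' C, statement19' C⟩
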